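/- Let k ≥ 3 and let n ≥ k² with k dividing n. There exists a configuration of n points in ℝ², each moving with constant velocity along one of the two vertical lines x = 0 and x = 1, such that the number of distinct k-collinearities (pairs (L, t) with at least k points on line L at time t, not all coincident, not all always collinear) is at least c·n³/k⁴ for an absolute constant c > 0. -/

import Mathlib

open scoped Classical

open Module

lemma line_mem (y₀ y₁ : ℝ) (P : ℝ × ℝ) :
    P ∈ line[ℝ, ((0:ℝ), y₀), ((1:ℝ), y₁)] ↔ P.2 = P.1 * (y₁ - y₀) + y₀ := by
  have key := vadd_left_mem_affineSpan_pair (k := ℝ) (p₁ := ((0:ℝ), y₀)) (p₂ := ((1:ℝ), y₁))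
    (v := P - ((0:ℝ), y₀))
  rw [show (P - ((0:ℝ), y₀)) +ᵥ ((0:ℝ), y₀) = P by simp] at key
  rw [key]
  simp only [vsub_eq_sub, Prod.ext_iff, Prod.smul_fst, Prod.smul_snd, Prod.fst_sub, Prod.snd_sub,
    smul_eq_mul]
  constructor
  · rintro ⟨r, h1, h2⟩
    have hr : r = P.1 := by linarith
    rw [hr] at h2
    linarith
  · intro h2
    exact ⟨P.1, by norm_num, by linarith⟩

lemma line_finrank (y₀ y₁ : ℝ) :
    finrank ℝ (line[ℝ, ((0:ℝ), y₀), ((1:ℝ), y₁)]).direction = 1 := by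
  rw [direction_affineSpan, vectorSpan_pair]
  apply finrank_span_singleton
  intro h
  have := congrArg Prod.fst h
  simp [Prod.ext_iff] at this

lemma collinear_of_fst_eq (c : ℝ) (s : Set (ℝ × ℝ)) (h : ∀ p ∈ s, p.1 = c) :
    Collinear ℝ s := by
  rw [collinear_iff_exists_forall_eq_smul_vadd]
  exact ⟨(c, 0), (0, 1), fun p hp => ⟨p.2, by simp [Prod.ext_iff, h p hp]⟩⟩

lemma not_collinear_of (y₀ y₁ y₂ : ℝ) (hne : y₁ ≠ y₂) (s : Set (ℝ × ℝ))
    (h0 : ((0:ℝ), y₀) ∈ s) (h1 : ((1:ℝ), y₁) ∈ s) (h2 : ((1:ℝ), y₂) ∈ s) :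
    ¬ Collinear ℝ s := by
  intro hc
  rw [collinear_iff_exists_forall_eq_smul_vadd] at hc
  obtain ⟨p₀, v, hv⟩ := hc
  obtain ⟨r0, hr0⟩ := hv _ h0
  obtain ⟨r1, hr1⟩ := hv _ h1
  obtain ⟨r2, hr2⟩ := hv _ h2
  rw [Prod.ext_iff] at hr0 hr1 hr2
  simp only [vadd_eq_add, Prod.fst_add, Prod.snd_add, Prod.smul_fst, Prod.smul_snd,
    smul_eq_mul] at hr0 hr1 hr2
  have hv1 : v.1 ≠ 0 := by
    intro h
    rw [h] at hr0 hr1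
    simp at hr0 hr1
    linarith [hr0.1, hr1.1]
  have h12 : (r1 - r2) * v.1 = 0 := by nlinarith [hr1.1, hr2.1]
  rcases mul_eq_zero.1 h12 with h | h
  · apply hne
    have : r1 = r2 := by linarith
    rw [hr1.2, hr2.2, this]
  · exact hv1 h

lemma line_eq_of_dim1 (L : AffineSubspace ℝ (ℝ × ℝ)) (hd : finrank ℝ L.direction = 1)
    {P Q : ℝ × ℝ} (hP : P ∈ L) (hQ : Q ∈ L) (hne : P ≠ Q) :
    L = line[ℝ, P, Q] := by
  have hle : line[ℝ, P, Q] ≤ L := affineSpan_pair_le_of_mem_of_mem hP hQ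
  have hdir : (line[ℝ, P, Q]).direction = L.direction := by
    apply Submodule.eq_of_le_of_finrank_eq (AffineSubspace.direction_le hle)
    rw [hd, direction_affineSpan, vectorSpan_pair]
    exact finrank_span_singleton (sub_ne_zero_of_ne hne)
  exact (AffineSubspace.ext_of_direction_eq hdir
    ⟨P, left_mem_affineSpan_pair _ _ _, hP⟩).symm

lemma pos_fst {n : ℕ} (a v : Fin n → ℝ × ℝ)
    (ha : ∀ i, ((a i).1 = 0 ∨ (a i).1 = 1) ∧ (v i).1 = 0) (i : Fin n) (s : ℝ) :
    (a i + s • v i).1 = (a i).1 := by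
  simp [(ha i).2]

lemma pos_shift {n : ℕ} (a v : Fin n → ℝ × ℝ) (i : Fin n) (s t : ℝ) :
    a i + s • v i = (a i + t • v i) + (s - t) • v i := by
  rw [sub_smul]; abel

lemma X_finite {n k : ℕ} (a v : Fin n → ℝ × ℝ)
    (ha : ∀ i, ((a i).1 = 0 ∨ (a i).1 = 1) ∧ (v i).1 = 0) :
    {x : AffineSubspace ℝ (ℝ × ℝ) × ℝ |
        Module.finrank ℝ x.1.direction = 1 ∧
        k ≤ (Finset.univ.filter (fun i => a i + x.2 • v i ∈ x.1)).card ∧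
        (∃ i j : Fin n, a i + x.2 • v i ∈ x.1 ∧ a j + x.2 • v j ∈ x.1 ∧
          a i + x.2 • v i ≠ a j + x.2 • v j) ∧
        ¬ (∀ s : ℝ, Collinear ℝ
            ((fun i => a i + s • v i) '' {i | a i + x.2 • v i ∈ x.1}))}.Finite := by
  set F : Fin n × Fin n × Fin n × Fin n → AffineSubspace ℝ (ℝ × ℝ) × ℝ := fun z =>
    (line[ℝ, a z.2.2.1 + (((a z.2.1).2 - (a z.1).2) / ((v z.1).2 - (v z.2.1).2)) • v z.2.2.1,
      a z.2.2.2 + (((a z.2.1).2 - (a z.1).2) / ((v z.1).2 - (v z.2.1).2)) • v z.2.2.2],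
      ((a z.2.1).2 - (a z.1).2) / ((v z.1).2 - (v z.2.1).2)) with hF
  apply Set.Finite.subset (Set.finite_range F)
  rintro ⟨L, t⟩ ⟨hd, -, -, hncol⟩
  simp only [Set.mem_setOf_eq] at hncol
  have hex : (∃ iL, a iL + t • v iL ∈ L ∧ (a iL).1 = 0) ∧
      (∃ iR, a iR + t • v iR ∈ L ∧ (a iR).1 = 1) := by
    constructor
    · by_contra hcon
      push_neg at hcon
      apply hncol
      intro s
      apply collinear_of_fst_eq 1
      rintro p ⟨i, hi, rfl⟩
      rw [pos_fst a v ha]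
      rcases (ha i).1 with h | h
      · exact absurd h (hcon i hi)
      · exact h
    · by_contra hcon
      push_neg at hcon
      apply hncol
      intro s
      apply collinear_of_fst_eq 0
      rintro p ⟨i, hi, rfl⟩
      rw [pos_fst a v ha]
      rcases (ha i).1 with h | h
      · exact h
      · exact absurd h (hcon i hi)
  obtain ⟨⟨iL, hiL, haL⟩, iR, hiR, haR⟩ := hex
  set yL := (a iL + t • v iL).2 with hyL
  set yR := (a iR + t • v iR).2 with hyR
  have hPL : a iL + t • v iL = ((0:ℝ), yL) := by
    rw [Prod.ext_iff]; exact ⟨by rw [pos_fst a v ha, haL], rfl⟩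
  have hPR : a iR + t • v iR = ((1:ℝ), yR) := by
    rw [Prod.ext_iff]; exact ⟨by rw [pos_fst a v ha, haR], rfl⟩
  have hLine : L = line[ℝ, ((0:ℝ), yL), ((1:ℝ), yR)] := by
    apply line_eq_of_dim1 L hd (hPL ▸ hiL) (hPR ▸ hiR)
    intro h
    have := congrArg Prod.fst h
    norm_num at this
  have hsame : ∀ i j : Fin n, a i + t • v i ∈ L → a j + t • v j ∈ L →
      (a i).1 = (a j).1 → a i + t • v i = a j + t • v j := by
    intro i j hi hj hij
    rw [hLine, line_mem] at hi hj
    rw [Prod.ext_iff, pos_fst a v ha, pos_fst a v ha, hi, hj, pos_fst a v ha, pos_fst a v ha, hij]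
    exact ⟨rfl, rfl⟩
  have hpair : ∃ i, (a i + t • v i ∈ L) ∧ ∃ j, (a j + t • v j ∈ L) ∧
      (a i).1 = (a j).1 ∧ (v i).2 ≠ (v j).2 := by
    by_contra hcon
    push_neg at hcon
    apply hncol
    intro s
    have hsub : ((fun i => a i + s • v i) '' {i | a i + t • v i ∈ L}) ⊆
        {a iL + s • v iL, a iR + s • v iR} := by
      rintro p ⟨i, hi, rfl⟩
      have hveq : ∀ j : Fin n, a j + t • v j ∈ L → (a i).1 = (a j).1 →
          a i + s • v i = a j + s • v j := by
        intro j hj hij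
        have h1 : a i + t • v i = a j + t • v j := hsame i j hi hj hij
        have h2 : v i = v j := by
          rw [Prod.ext_iff, (ha i).2, (ha j).2]
          exact ⟨rfl, hcon i hi j hj hij⟩
        rw [pos_shift a v i s t, pos_shift a v j s t, h1, h2]
      rcases (ha i).1 with h | h
      · left; exact hveq iL hiL (by rw [h, haL])
      · right; exact hveq iR hiR (by rw [h, haR])
    exact (collinear_pair ℝ _ _).subset hsub
  obtain ⟨i, hi, j, hj, hside, hvne⟩ := hpair
  have heq := hsame i j hi hj hside
  have hsnd : (a i).2 + t * (v i).2 = (a j).2 + t * (v j).2 := by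
    have := congrArg Prod.snd heq
    simpa using this
  have ht : ((a j).2 - (a i).2) / ((v i).2 - (v j).2) = t := by
    have hne : (v i).2 - (v j).2 ≠ 0 := sub_ne_zero_of_ne hvne
    field_simp
    linarith
  refine ⟨⟨i, j, iL, iR⟩, ?_⟩
  rw [hF]
  simp only
  rw [ht, Prod.ext_iff]
  refine ⟨?_, rfl⟩
  rw [hPL, hPR]
  exact hLine.symm

/-- Lower bound construction: for `k ≥ 3` and `n ≥ k²` with `k ∣ n`, there are `n`
kinetic points, each moving with constant velocity along one of the vertical lines
`x = 0` and `x = 1`, that determine at least `c·n³/k⁴` distinct `k`-collinearities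
(pairs `(L, t)` of a line and a time with at least `k` points on `L` at time `t`, the
points on `L` not all coincident at time `t`, and not all collinear at all times),
for an absolute constant `c > 0`. -/
theorem many_k_collinearities_construction :
    ∃ c : ℝ, 0 < c ∧ ∀ k n : ℕ, 3 ≤ k → k ^ 2 ≤ n → k ∣ n →
      ∃ a v : Fin n → ℝ × ℝ,
        (∀ i : Fin n, ((a i).1 = 0 ∨ (a i).1 = 1) ∧ (v i).1 = 0) ∧
        c * (n : ℝ) ^ 3 / (k : ℝ) ^ 4 ≤
          ({x : AffineSubspace ℝ (ℝ × ℝ) × ℝ |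
              Module.finrank ℝ x.1.direction = 1 ∧
              k ≤ (Finset.univ.filter
                    (fun i => a i + x.2 • v i ∈ x.1)).card ∧
              (∃ i j : Fin n, a i + x.2 • v i ∈ x.1 ∧ a j + x.2 • v j ∈ x.1 ∧
                a i + x.2 • v i ≠ a j + x.2 • v j) ∧
              ¬ (∀ s : ℝ, Collinear ℝ
                  ((fun i => a i + s • v i) '' {i | a i + x.2 • v i ∈ x.1}))}.ncard :
            ℝ) := by
  refine ⟨1/18, by norm_num, ?_⟩
  intro k n hk hn hdvd
  obtain ⟨m, hm⟩ := hdvd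
  have hk0 : 0 < k := by omega
  have hkm : k ≤ m := by
    have hkk : k * k ≤ k * m := by
      calc k * k = k ^ 2 := (pow_two k).symm
      _ ≤ n := hn
      _ = k * m := hm
    exact Nat.le_of_mul_le_mul_left hkk hk0
  have hm3 : 3 ≤ m := le_trans hk hkm
  have hm0 : 0 < m := by omega
  set p := k / 2 with hp
  have hp1 : 1 ≤ p := by omega
  have hpk : p + 1 < k := by omega
  set a : Fin n → ℝ × ℝ :=
    fun i => (if (i : ℕ) / m < p then (0:ℝ) else 1, (((i : ℕ) % m : ℕ) : ℝ)) with haa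
  set v : Fin n → ℝ × ℝ :=
    fun i => (0, if (i : ℕ) / m < p then (((i : ℕ) / m : ℕ) : ℝ)
      else (((i : ℕ) / m - p : ℕ) : ℝ)) with hvv
  have ha : ∀ i : Fin n, ((a i).1 = 0 ∨ (a i).1 = 1) ∧ (v i).1 = 0 := by
    intro i
    constructor
    · rw [haa]; dsimp only; split <;> simp
    · rw [hvv]
  refine ⟨a, v, ha, ?_⟩
  set T := m / (2 * k) with hT
  set H := m / 2 with hH
  have hHm : H ≤ m := Nat.div_le_self _ _
  have hkT : k * T ≤ m - H := by
    have h1 : T = (m / 2) / k := by rw [hT, Nat.div_div_eq_div_mul, Nat.mul_comm]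
    have h2 : k * ((m / 2) / k) ≤ m / 2 := Nat.mul_div_le (m / 2) k
    have h3 : k * T ≤ m / 2 := by rw [h1]; exact h2
    omega
  have hgt : ∀ g t' : ℕ, g < k → t' ≤ T → g * t' ≤ m - H := by
    intro g t' hg ht'
    calc g * t' ≤ k * T := Nat.mul_le_mul (le_of_lt hg) ht'
    _ ≤ m - H := hkT
  -- the index of the point in group `g` that sits at height `h₀`/`h₁` at time `t`
  set X : Set (AffineSubspace ℝ (ℝ × ℝ) × ℝ) :=
    {x : AffineSubspace ℝ (ℝ × ℝ) × ℝ |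
        Module.finrank ℝ x.1.direction = 1 ∧
        k ≤ (Finset.univ.filter (fun i => a i + x.2 • v i ∈ x.1)).card ∧
        (∃ i j : Fin n, a i + x.2 • v i ∈ x.1 ∧ a j + x.2 • v j ∈ x.1 ∧
          a i + x.2 • v i ≠ a j + x.2 • v j) ∧
        ¬ (∀ s : ℝ, Collinear ℝ
            ((fun i => a i + s • v i) '' {i | a i + x.2 • v i ∈ x.1}))} with hX
  set φ : ℕ × ℕ × ℕ → AffineSubspace ℝ (ℝ × ℝ) × ℝ :=
    fun w => (line[ℝ, ((0:ℝ), ((w.2.1 : ℕ) : ℝ)), ((1:ℝ), ((w.2.2 : ℕ) : ℝ))], ((w.1 : ℕ) : ℝ))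
    with hφ
  set S : Finset (ℕ × ℕ × ℕ) :=
    Finset.range (T + 1) ×ˢ (Finset.Ico (m - H) m ×ˢ Finset.Ico (m - H) m) with hS
  have hmemS : ∀ w ∈ S, w.1 ≤ T ∧ (m - H ≤ w.2.1 ∧ w.2.1 < m) ∧ (m - H ≤ w.2.2 ∧ w.2.2 < m) := by
    intro w hw
    rw [hS, Finset.mem_product] at hw
    obtain ⟨h1, h2⟩ := hw
    rw [Finset.mem_product, Finset.mem_Ico, Finset.mem_Ico] at h2
    rw [Finset.mem_range] at h1
    exact ⟨by omega, h2⟩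
  -- main fact : each element of S gives a k-collinearity
  have hmain : ∀ w ∈ S, φ w ∈ X := by
    rintro ⟨t, h₀, h₁⟩ hw
    obtain ⟨ht, ⟨hh₀, hh₀'⟩, hh₁, hh₁'⟩ := hmemS _ hw
    dsimp only at ht hh₀ hh₀' hh₁ hh₁'
    -- index map
    have hJlt : ∀ g : Fin k, (if (g : ℕ) < p then h₀ - (g : ℕ) * t else h₁ - ((g : ℕ) - p) * t) < m := by
      intro g; split <;> omega
    have hidxlt : ∀ g : Fin k,
        (g : ℕ) * m + (if (g : ℕ) < p then h₀ - (g : ℕ) * t else h₁ - ((g : ℕ) - p) * t) < n := by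
      intro g
      calc (g : ℕ) * m + _ < (g : ℕ) * m + m := by have := hJlt g; omega
      _ = ((g : ℕ) + 1) * m := by ring
      _ ≤ k * m := Nat.mul_le_mul_right m g.isLt
      _ = n := hm.symm
    set idx : Fin k → Fin n := fun g =>
      ⟨(g : ℕ) * m + (if (g : ℕ) < p then h₀ - (g : ℕ) * t else h₁ - ((g : ℕ) - p) * t),
        hidxlt g⟩ with hidx
    have hdm : ∀ g : Fin k, ((idx g : ℕ)) / m = (g : ℕ) ∧
        ((idx g : ℕ)) % m = (if (g : ℕ) < p then h₀ - (g : ℕ) * t else h₁ - ((g : ℕ) - p) * t) := by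
      intro g
      rw [hidx]
      dsimp only
      constructor
      · rw [Nat.mul_comm, Nat.mul_add_div hm0, Nat.div_eq_of_lt (hJlt g)]
        omega
      · rw [Nat.mul_comm, Nat.mul_add_mod, Nat.mod_eq_of_lt (hJlt g)]
    -- values of a and v at idx g
    have hav : ∀ g : Fin k,
        a (idx g) = (if (g : ℕ) < p then (0:ℝ) else 1,
          ((if (g : ℕ) < p then h₀ - (g : ℕ) * t else h₁ - ((g : ℕ) - p) * t : ℕ) : ℝ)) ∧
        v (idx g) = (0, if (g : ℕ) < p then ((g : ℕ) : ℝ) else (((g : ℕ) - p : ℕ) : ℝ)) := by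
      intro g
      have h1 := (hdm g).1
      have h2 := (hdm g).2
      constructor
      · rw [haa]
        dsimp only
        rw [h1, h2]
      · rw [hvv]
        dsimp only
        rw [h1]
    -- position of idx g at time s
    have hposL : ∀ g : Fin k, (g : ℕ) < p → ∀ s : ℝ,
        a (idx g) + s • v (idx g) = (0, ((h₀ - (g : ℕ) * t : ℕ) : ℝ) + s * ((g : ℕ) : ℝ)) := by
      intro g hg s
      rw [(hav g).1, (hav g).2]
      simp only [if_pos hg]
      simp [Prod.ext_iff]
    have hposR : ∀ g : Fin k, ¬ ((g : ℕ) < p) → ∀ s : ℝ,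
        a (idx g) + s • v (idx g) = (1, ((h₁ - ((g : ℕ) - p) * t : ℕ) : ℝ) + s * (((g : ℕ) - p : ℕ) : ℝ)) := by
      intro g hg s
      rw [(hav g).1, (hav g).2]
      simp only [if_neg hg]
      simp [Prod.ext_iff]
    -- position at time t : (0,h₀) or (1,h₁)
    have hposLt : ∀ g : Fin k, (g : ℕ) < p →
        a (idx g) + (t : ℝ) • v (idx g) = (0, (h₀ : ℝ)) := by
      intro g hg
      rw [hposL g hg t, Prod.ext_iff]
      refine ⟨rfl, ?_⟩
      have hle : (g : ℕ) * t ≤ h₀ := le_trans (hgt _ t (lt_trans hg (by omega)) ht) hh₀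
      dsimp only
      rw [Nat.cast_sub hle]
      push_cast
      ring
    have hposRt : ∀ g : Fin k, ¬ ((g : ℕ) < p) →
        a (idx g) + (t : ℝ) • v (idx g) = (1, (h₁ : ℝ)) := by
      intro g hg
      rw [hposR g hg t, Prod.ext_iff]
      refine ⟨rfl, ?_⟩
      have hle : ((g : ℕ) - p) * t ≤ h₁ := le_trans (hgt _ t (by omega) ht) hh₁
      dsimp only
      rw [Nat.cast_sub hle]
      push_cast
      ring
    have hmemL : ((0:ℝ), (h₀ : ℝ)) ∈ line[ℝ, ((0:ℝ), (h₀ : ℝ)), ((1:ℝ), (h₁ : ℝ))] := by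
      rw [line_mem]; ring
    have hmemR : ((1:ℝ), (h₁ : ℝ)) ∈ line[ℝ, ((0:ℝ), (h₀ : ℝ)), ((1:ℝ), (h₁ : ℝ))] := by
      rw [line_mem]; ring
    have hmemidx : ∀ g : Fin k,
        a (idx g) + (t : ℝ) • v (idx g) ∈ line[ℝ, ((0:ℝ), (h₀ : ℝ)), ((1:ℝ), (h₁ : ℝ))] := by
      intro g
      by_cases hg : (g : ℕ) < p
      · rw [hposLt g hg]; exact hmemL
      · rw [hposRt g hg]; exact hmemR
    have hpklt : p < k := by omega
    have hg0 : ((⟨0, hk0⟩ : Fin k) : ℕ) < p := by dsimp only; omega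
    have hgp : ¬ (((⟨p, hpklt⟩ : Fin k) : ℕ) < p) := by dsimp only; omega
    have hgq : ¬ (((⟨p + 1, hpk⟩ : Fin k) : ℕ) < p) := by dsimp only; omega
    rw [hX, hφ]
    simp only [Set.mem_setOf_eq]
    refine ⟨line_finrank _ _, ?_, ?_, ?_⟩
    · -- card
      have hinj : Set.InjOn idx (Finset.univ : Finset (Fin k)) := by
        intro g1 _ g2 _ hgg
        have e1 := (hdm g1).1
        have e2 := (hdm g2).1
        apply Fin.ext
        rw [← e1, ← e2, hgg]
      have hmaps : ∀ g ∈ (Finset.univ : Finset (Fin k)), idx g ∈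
          Finset.univ.filter (fun i : Fin n => a i + (t : ℝ) • v i ∈
            line[ℝ, ((0:ℝ), (h₀ : ℝ)), ((1:ℝ), (h₁ : ℝ))]) := by
        intro g _
        rw [Finset.mem_filter]
        exact ⟨Finset.mem_univ _, hmemidx g⟩
      have := Finset.card_le_card_of_injOn idx hmaps hinj
      simpa using this
    · -- two distinct points
      refine ⟨idx ⟨0, hk0⟩, idx ⟨p, hpklt⟩, hmemidx _, hmemidx _, ?_⟩
      rw [hposLt _ hg0, hposRt _ hgp]
      intro hcc
      have := congrArg Prod.fst hcc
      norm_num at this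
    · -- not always collinear
      intro hcol
      have hc := hcol ((t : ℝ) + 1)
      apply not_collinear_of (h₀ : ℝ) (h₁ : ℝ) ((h₁ : ℝ) + 1) (by linarith) _ ?_ ?_ ?_ hc
      · refine ⟨idx ⟨0, hk0⟩, hmemidx _, ?_⟩
        dsimp only
        rw [hposL _ hg0]
        have hv0 : ((⟨0, hk0⟩ : Fin k) : ℕ) = 0 := rfl
        simp [hv0]
      · refine ⟨idx ⟨p, hpklt⟩, hmemidx _, ?_⟩
        dsimp only
        rw [hposR _ hgp]
        have hvp : ((⟨p, hpklt⟩ : Fin k) : ℕ) = p := rfl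
        simp [hvp]
      · refine ⟨idx ⟨p + 1, hpk⟩, hmemidx _, ?_⟩
        dsimp only
        rw [hposR _ hgq]
        have hs1 : ((⟨p + 1, hpk⟩ : Fin k) : ℕ) - p = 1 := by dsimp only; omega
        rw [hs1]
        have hle : 1 * t ≤ h₁ := by
          have := hgt 1 t (by omega) ht
          omega
        rw [Prod.ext_iff]
        refine ⟨rfl, ?_⟩
        dsimp only
        rw [Nat.cast_sub hle]
        push_cast
        ring
  -- injectivity of φ on S
  have hinjφ : Set.InjOn φ S := by
    rintro ⟨t1, h1, h1'⟩ hw1 ⟨t2, h2, h2'⟩ hw2 heq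
    rw [hφ, Prod.ext_iff] at heq
    obtain ⟨hline, htt⟩ := heq
    dsimp only at hline htt
    have ht12 : t1 = t2 := Nat.cast_injective htt
    have hmm : ((0:ℝ), (h1 : ℝ)) ∈ line[ℝ, ((0:ℝ), (h2 : ℝ)), ((1:ℝ), (h2' : ℝ))] := by
      rw [← hline, line_mem]; ring
    have hmm' : ((1:ℝ), (h1' : ℝ)) ∈ line[ℝ, ((0:ℝ), (h2 : ℝ)), ((1:ℝ), (h2' : ℝ))] := by
      rw [← hline, line_mem]; ring
    rw [line_mem] at hmm hmm'
    norm_num at hmm hmm'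
    simp [ht12, hmm, hmm']
  -- counting
  have hfin : X.Finite := X_finite a v ha
  have hcount : (S.card : ℝ) ≤ (X.ncard : ℝ) := by
    have h1 : (φ '' (S : Set (ℕ × ℕ × ℕ))).ncard = S.card := by
      rw [Set.ncard_image_of_injOn hinjφ, Set.ncard_coe_finset]
    have h2 : φ '' (S : Set (ℕ × ℕ × ℕ)) ⊆ X := by
      rintro x ⟨w, hw, rfl⟩
      exact hmain w hw
    have := Set.ncard_le_ncard h2 hfin
    rw [h1] at this
    exact_mod_cast this
  have hScard : S.card = (T + 1) * (H * H) := by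
    rw [hS]
    rw [Finset.card_product, Finset.card_product, Finset.card_range, Nat.card_Ico]
    congr 1
    rw [Nat.sub_sub_self hHm]
  -- arithmetic
  have hKpos : (0:ℝ) < (k : ℝ) := by exact_mod_cast hk0
  have hMT : (m : ℝ) < 2 * (k : ℝ) * ((T : ℝ) + 1) := by
    have hmlt : m < 2 * k * (T + 1) := by
      have h1 : 2 * k * T + m % (2 * k) = m := by
        rw [hT]; exact Nat.div_add_mod m (2 * k)
      have h2 := Nat.mod_lt m (show 0 < 2 * k by omega)
      have h3 : 2 * k * (T + 1) = 2 * k * T + 2 * k := by ring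
      omega
    calc (m : ℝ) < ((2 * k * (T + 1) : ℕ) : ℝ) := by exact_mod_cast hmlt
    _ = 2 * (k : ℝ) * ((T : ℝ) + 1) := by push_cast; ring
  have hMH : (m : ℝ) ≤ 3 * (H : ℝ) := by
    have h2H : m ≤ 2 * H + 1 := by omega
    have : (m : ℝ) ≤ 2 * (H : ℝ) + 1 := by exact_mod_cast h2H
    have hm3' : (3 : ℝ) ≤ (m : ℝ) := by exact_mod_cast hm3
    -- m ≤ 2H+1 and m ≥ 3 give m ≤ 3H (since H ≥ (m-1)/2 ≥ m/3)
    nlinarith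
  have hH0 : (0:ℝ) ≤ (H : ℝ) := Nat.cast_nonneg _
  have hT1 : (0:ℝ) ≤ (T : ℝ) + 1 := by positivity
  have hM0 : (0:ℝ) ≤ (m : ℝ) := Nat.cast_nonneg _
  have hcube : (m : ℝ) ^ 3 ≤ 18 * (k : ℝ) * (((T : ℝ) + 1) * ((H : ℝ) * (H : ℝ))) := by
    nlinarith [mul_nonneg hT1 hH0, mul_nonneg hM0 hM0, mul_nonneg (mul_nonneg hM0 hM0) hH0,
      mul_nonneg hM0 hH0]
  have hnm : (n : ℝ) = (k : ℝ) * (m : ℝ) := by exact_mod_cast hm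
  calc (1/18 : ℝ) * (n : ℝ) ^ 3 / (k : ℝ) ^ 4
      = (m : ℝ) ^ 3 / (18 * (k : ℝ)) := by
        rw [hnm]; field_simp
    _ ≤ ((T : ℝ) + 1) * ((H : ℝ) * (H : ℝ)) := by
        rw [div_le_iff₀ (by positivity)]
        linarith [hcube]
    _ = ((S.card : ℕ) : ℝ) := by rw [hScard]; push_cast; ring
    _ ≤ (X.ncard : ℝ) := hcount
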